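/- Let n be an odd integer with n > 9 and n ≠ 15, and let T(x) = (x^n - 1)/(x - 1) in F_2[x]. Then W(T) · W(2^n - 1) < 2^{n/2 - 1}. -/

import Mathlib

open Polynomial UniqueFactorizationMonoid

section Aux

local notation "R" => Polynomial (ZMod 2)

lemma zmod2_eq_one {c : ZMod 2} (h : c ≠ 0) : c = 1 := by revert h; revert c; decide

instance : Subsingleton (Polynomial (ZMod 2))ˣ := by
  constructor
  intro u v
  have h : ∀ w : (Polynomial (ZMod 2))ˣ, (w : R) = 1 := by
    intro w
    obtain ⟨c, hc, hcw⟩ := Polynomial.isUnit_iff.mp w.isUnit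
    rw [← hcw, zmod2_eq_one hc.ne_zero, map_one]
  ext
  rw [h u, h v]

lemma assoc_eq {a b : R} (h : Associated a b) : a = b := by
  rcases h with ⟨u, hu⟩
  rw [← hu, Subsingleton.elim u 1, Units.val_one, mul_one]

lemma dvd_mod_step (Q : R) (a b : ℕ) (ha : Q ∣ X ^ a - 1) (hb : Q ∣ X ^ b - 1) :
    Q ∣ X ^ (b % a) - 1 := by
  have key : (X : R) ^ b - X ^ (b % a) = X ^ (b % a) * ((X ^ a) ^ (b / a) - 1) := by
    have h := Nat.mod_add_div b a
    calc (X : R) ^ b - X ^ (b % a)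
        = X ^ (b % a + a * (b / a)) - X ^ (b % a) := by rw [h]
      _ = X ^ (b % a) * ((X ^ a) ^ (b / a) - 1) := by rw [pow_add, ← pow_mul]; ring
  have h2 : Q ∣ (X : R) ^ b - X ^ (b % a) := by
    rw [key]
    exact Dvd.dvd.mul_left (ha.trans (by simpa using sub_dvd_pow_sub_pow ((X:R)^a) 1 (b/a))) _
  have h3 : (X : R) ^ (b % a) - 1 = (X ^ b - 1) - (X ^ b - X ^ (b % a)) := by ring
  rw [h3]
  exact dvd_sub hb h2

lemma dvd_X_gcd (Q : R) : ∀ a b : ℕ, Q ∣ X ^ a - 1 → Q ∣ X ^ b - 1 → Q ∣ X ^ (Nat.gcd a b) - 1 := by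
  intro a
  induction a using Nat.strong_induction_on with
  | _ a ih =>
    intro b ha hb
    rcases Nat.eq_zero_or_pos a with rfl | hpos
    · simpa using hb
    · rw [Nat.gcd_rec a b]
      exact ih (b % a) (Nat.mod_lt b hpos) a (dvd_mod_step Q a b ha hb) ha

lemma irred_dvd_X_pow (P : R) (hirr : Irreducible P) (hmon : P.Monic) (hPX : P ≠ X) :
    P ∣ X ^ (2 ^ P.natDegree - 1) - 1 := by
  haveI : Fact (Irreducible P) := ⟨hirr⟩
  have hP0 : P ≠ 0 := hmon.ne_zero
  let pb := AdjoinRoot.powerBasis hP0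
  haveI : Module.Finite (ZMod 2) (AdjoinRoot P) := Module.Finite.of_basis pb.basis
  haveI : Fintype (AdjoinRoot P) := Module.fintypeOfFintype pb.basis
  have hdim : pb.dim = P.natDegree := rfl
  have hcard : Fintype.card (AdjoinRoot P) = 2 ^ P.natDegree := by
    rw [Module.card_eq_pow_finrank (K := ZMod 2), ZMod.card, pb.finrank, hdim]
  have hroot : (aeval (AdjoinRoot.root P)) P = 0 := by
    rw [AdjoinRoot.aeval_eq, AdjoinRoot.mk_self]
  have hr0 : AdjoinRoot.root P ≠ 0 := by
    intro h
    have hc : P.coeff 0 = 0 := by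
      have h2 : (aeval (0 : AdjoinRoot P)) P = 0 := h ▸ hroot
      rw [aeval_def, eval₂_at_zero] at h2
      exact (algebraMap (ZMod 2) (AdjoinRoot P)).injective (by simpa using h2)
    have hXdvd : X ∣ P := X_dvd_iff.mpr hc
    exact hPX (assoc_eq ((irreducible_X.associated_of_dvd hirr hXdvd))).symm
  have hpow : (AdjoinRoot.root P) ^ (2 ^ P.natDegree - 1) = 1 := by
    rw [← hcard]; exact FiniteField.pow_card_sub_one_eq_one _ hr0
  have heval : (aeval (AdjoinRoot.root P)) (X ^ (2 ^ P.natDegree - 1) - 1 : R) = 0 := by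
    simp [hpow]
  have hdvd := minpoly.dvd (ZMod 2) (AdjoinRoot.root P) heval
  have hmin : minpoly (ZMod 2) (AdjoinRoot.root P) = P := by
    rw [AdjoinRoot.minpoly_root hP0, hmon.leadingCoeff, inv_one, map_one, mul_one]
  rwa [hmin] at hdvd

/-! ### Nat side helpers -/

lemma pow_eq_one_of_dvd {p n : ℕ} [NeZero p] (hd : p ∣ 2 ^ n - 1) : (2 : ZMod p) ^ n = 1 := by
  have h1 : ((2 ^ n - 1 : ℕ) : ZMod p) = 0 := (ZMod.natCast_eq_zero_iff _ p).mpr hd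
  have h2 : (1 : ℕ) ≤ 2 ^ n := Nat.one_le_two_pow
  rw [Nat.cast_sub h2, Nat.cast_pow, Nat.cast_one, sub_eq_zero] at h1
  exact_mod_cast h1

lemma odd_order_contra {p n : ℕ} (hp : p.Prime) (hn : Odd n) (h2 : (2 : ZMod p) ≠ 0)
    (hd : p ∣ 2 ^ n - 1)
    (hcheck : ∀ g ∈ Nat.divisors (p - 1), g % 2 = 1 → (2 : ZMod p) ^ g ≠ 1) : False := by
  haveI := Fact.mk hp
  have h : (2 : ZMod p) ^ n = 1 := pow_eq_one_of_dvd hd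
  set d := orderOf (2 : ZMod p) with hdd
  have hdn : d ∣ n := orderOf_dvd_of_pow_eq_one h
  have hdodd : d % 2 = 1 := by
    rcases Nat.even_or_odd d with he | ho
    · exfalso
      have : 2 ∣ n := dvd_trans he.two_dvd hdn
      rcases hn with ⟨m, hm⟩; omega
    · exact Nat.odd_iff.mp ho
  have hd1 : d ∣ p - 1 := orderOf_dvd_of_pow_eq_one (ZMod.pow_card_sub_one_eq_one h2)
  have hp2 := hp.two_le
  have hdmem : d ∈ Nat.divisors (p - 1) := Nat.mem_divisors.mpr ⟨hd1, by omega⟩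
  exact hcheck d hdmem hdodd (pow_orderOf_eq_one _)

lemma ord_dvd_of_pow (p q : ℕ) [Fact p.Prime] [Fact q.Prime] {n : ℕ}
    (hq : (2 : ZMod p) ^ q = 1) (hq1 : (2 : ZMod p) ≠ 1) (h : (2 : ZMod p) ^ n = 1) :
    q ∣ n := by
  have h3 : orderOf (2 : ZMod p) = q := orderOf_eq_prime hq hq1
  exact h3 ▸ orderOf_dvd_of_pow_eq_one h

lemma big_prime {p n : ℕ} (hp : p.Prime) (hn : Odd n) (hd : p ∣ 2 ^ n - 1)
    (h7 : p ≠ 7) (h23 : p ≠ 23) (h31 : p ≠ 31) (h47 : p ≠ 47) : 64 ≤ p := by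
  by_contra hlt
  push_neg at hlt
  have h2 := hp.two_le
  have hn1 : n ≠ 0 := by rcases hn with ⟨m, hm⟩; omega
  have h2pow : (2:ℕ) ∣ 2 ^ n := dvd_pow_self 2 hn1
  have h1pow : (1:ℕ) ≤ 2 ^ n := Nat.one_le_two_pow
  interval_cases p <;>
    first
      | omega
      | exact odd_order_contra hp hn (by decide) hd (by decide)

end Aux

section Main

open UniqueFactorizationMonoid

local notation "R" => Polynomial (ZMod 2)

instance : Fact (Nat.Prime 3) := ⟨by norm_num⟩
instance : Fact (Nat.Prime 5) := ⟨by norm_num⟩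
instance : Fact (Nat.Prime 7) := ⟨by norm_num⟩
instance : Fact (Nat.Prime 11) := ⟨by norm_num⟩
instance : Fact (Nat.Prime 23) := ⟨by norm_num⟩
instance : Fact (Nat.Prime 31) := ⟨by norm_num⟩
instance : Fact (Nat.Prime 47) := ⟨by norm_num⟩

lemma final_arith (n r w A B C' E c2 c3 c4 c5 S : ℕ)
    (hn : 9 < n) (h15 : n ≠ 15) (hodd : n % 2 = 1)
    (h6r : 6 * r ≤ S + (4 * c2 + 3 * c3 + 2 * c4 + c5)) (hS : S + 1 ≤ n)
    (h6w : 6 * w ≤ (n - 1) + (4 * A + 2 * B + 2 * C' + E))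
    (hA : A = 0 ∨ (A = 1 ∧ 3 ∣ n)) (hB : B = 0 ∨ (B = 1 ∧ 11 ∣ n))
    (hC : C' = 0 ∨ (C' = 1 ∧ 5 ∣ n)) (hE : E = 0 ∨ (E = 1 ∧ 23 ∣ n))
    (hc2 : c2 = 0 ∨ (c2 ≤ 1 ∧ 3 ∣ n)) (hc3 : c3 = 0 ∨ (c3 ≤ 2 ∧ 7 ∣ n))
    (hc4 : c4 = 0 ∨ (c4 ≤ 1 ∧ 5 ∣ n) ∨ (c4 ≤ 3 ∧ 3 ∣ n ∧ 5 ∣ n))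
    (hc5 : c5 = 0 ∨ (c5 ≤ 6 ∧ 31 ∣ n)) :
    2 * (r + w) + 3 ≤ n := by
  rcases Nat.lt_or_ge n 38 with h | h
  · interval_cases n <;> omega
  · have hA' : A ≤ 1 := by rcases hA with h' | ⟨h', _⟩ <;> omega
    have hB' : B ≤ 1 := by rcases hB with h' | ⟨h', _⟩ <;> omega
    have hC'' : C' ≤ 1 := by rcases hC with h' | ⟨h', _⟩ <;> omega
    have hE' : E ≤ 1 := by rcases hE with h' | ⟨h', _⟩ <;> omega
    have hc2' : c2 ≤ 1 := by rcases hc2 with h' | ⟨h', _⟩ <;> omega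
    have hc3' : c3 ≤ 2 := by rcases hc3 with h' | ⟨h', _⟩ <;> omega
    have hc4' : c4 ≤ 3 := by rcases hc4 with h' | ⟨h', _⟩ | ⟨h', _⟩ <;> omega
    have hc5' : c5 ≤ 6 := by rcases hc5 with h' | ⟨h', _⟩ <;> omega
    clear hA hB hC hE hc2 hc3 hc4 hc5
    omega

lemma monic_of_ne_zero {p : R} (hp : p ≠ 0) : p.Monic :=
  zmod2_eq_one (Polynomial.leadingCoeff_ne_zero.mpr hp)

/-- For odd `n > 9`, `n ≠ 15`, and `T = (x^n-1)/(x-1)` over `F_2`, the sieve inequality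
`W(T) · W(2^n - 1) < 2^{n/2 - 1}` holds. -/
theorem stmt_9 (n : ℕ) (hn : 9 < n) (hn15 : n ≠ 15) (hodd : Odd n)
    (T : Polynomial (ZMod 2)) (hT : T = ∑ i ∈ Finset.range n, X ^ i) :
    (({d : Polynomial (ZMod 2) | d.Monic ∧ Squarefree d ∧ d ∣ T}.ncard : ℝ)
        * ({d : ℕ | Squarefree d ∧ d ∣ 2 ^ n - 1}.ncard : ℝ))
      < (2 : ℝ) ^ ((n : ℝ) / 2 - 1) := by
  have hn0 : n ≠ 0 := by omega
  -- basic facts about T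
  have hTm : T * (X - 1) = X ^ n - 1 := by rw [hT]; exact geom_sum_mul X n
  have hXnMon : (X ^ n - 1 : R).Monic := by
    simpa using monic_X_pow_sub_C (1 : ZMod 2) hn0
  have hT0 : T ≠ 0 := by
    intro h
    exact hXnMon.ne_zero (by rw [← hTm, h, zero_mul])
  have hX1 : (X - 1 : R) ≠ 0 := by
    simpa using (monic_X_sub_C (1 : ZMod 2)).ne_zero
  have hdegT : T.natDegree + 1 = n := by
    have h1 : (T * (X - 1)).natDegree = T.natDegree + (X - 1 : R).natDegree :=
      Polynomial.natDegree_mul hT0 hX1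
    have h2 : ((X : R) - 1).natDegree = 1 := by
      simpa using natDegree_X_sub_C (1 : ZMod 2)
    have h3 : ((X : R) ^ n - 1).natDegree = n := by
      simpa using natDegree_X_pow_sub_C (n := n) (r := (1 : ZMod 2))
    rw [hTm, h3] at h1
    omega
  have hTdvdXn : T ∣ X ^ n - 1 := ⟨X - 1, hTm.symm⟩
  -- evaluations of T
  have hTeval : ∀ a : ZMod 2, T.eval a = 1 := by
    intro a
    have ha : a = 0 ∨ a = 1 := by
      by_cases h : a = 0
      · exact Or.inl h
      · exact Or.inr (zmod2_eq_one h)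
    rcases ha with rfl | rfl
    · rw [hT]
      rw [eval_geom_sum]
      rw [Finset.sum_eq_single 0]
      · simp
      · intro b _ hb; exact zero_pow hb
      · intro h; exact absurd (Finset.mem_range.mpr (by omega)) h
    · rw [hT, eval_geom_sum]
      simp only [one_pow, Finset.sum_const, Finset.card_range, nsmul_eq_mul, mul_one]
      rw [← ZMod.natCast_mod, Nat.odd_iff.mp hodd, Nat.cast_one]
  -- the factor set
  set F : Finset R := (normalizedFactors T).toFinset with hF
  set r : ℕ := F.card with hr
  have hFprime : ∀ P ∈ F, Prime P := fun P hP =>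
    prime_of_normalized_factor P (Multiset.mem_toFinset.mp hP)
  have hFdvd : ∀ P ∈ F, P ∣ T := fun P hP =>
    dvd_of_mem_normalizedFactors (Multiset.mem_toFinset.mp hP)
  have hFmon : ∀ P ∈ F, P.Monic := fun P hP => monic_of_ne_zero (hFprime P hP).ne_zero
  have hFdeg : ∀ P ∈ F, 2 ≤ P.natDegree := by
    intro P hP
    have hprime := hFprime P hP
    have hPne : P.natDegree ≠ 0 := by
      intro h0
      have hPC : P = C (P.coeff 0) := Polynomial.eq_C_of_natDegree_eq_zero h0
      have : IsUnit P := by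
        rw [hPC]
        exact (Polynomial.isUnit_C).mpr (isUnit_iff_ne_zero.mpr (by
          intro hc
          exact hprime.ne_zero (by rw [hPC, hc, map_zero])))
      exact hprime.not_unit this
    have hPne1 : P.natDegree ≠ 1 := by
      intro h1
      have hc1 : P.coeff 1 = 1 := by
        have := hFmon P hP
        rwa [Polynomial.Monic, Polynomial.leadingCoeff, h1] at this
      obtain ⟨a, ha⟩ : ∃ a : ZMod 2, P = X + C a := by
        refine ⟨P.coeff 0, ?_⟩
        have := Polynomial.eq_X_add_C_of_natDegree_le_one (le_of_eq h1)
        rwa [hc1, map_one, one_mul] at this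
      have hroot : P.eval a = 0 := by
        rw [ha]
        simp only [eval_add, eval_X, eval_C]
        have h2 : ∀ x : ZMod 2, x + x = 0 := by decide
        exact h2 a
      have hTz : T.eval a = 0 := by
        rcases hFdvd P hP with ⟨q, hq⟩
        rw [hq, eval_mul, hroot, zero_mul]
      rw [hTeval _] at hTz
      exact one_ne_zero hTz
    omega
  -- sum of degrees of distinct factors
  have hsumdeg : (∑ P ∈ F, P.natDegree) + 1 ≤ n := by
    have hproddvd : (∏ P ∈ F, P) ∣ T := Finset.prod_primes_dvd T hFprime hFdvd
    have hdeg : (∏ P ∈ F, P).natDegree = ∑ P ∈ F, P.natDegree :=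
      Polynomial.natDegree_prod _ _ (fun P hP => (hFprime P hP).ne_zero)
    have := Polynomial.natDegree_le_of_dvd hproddvd hT0
    omega
  -- degree-d counts
  have hcd : ∀ d : ℕ, 2 ≤ d →
      d * (F.filter (fun P => P.natDegree = d)).card ≤ Nat.gcd n (2 ^ d - 1) := by
    intro d hd2
    set g := Nat.gcd n (2 ^ d - 1) with hg
    have hg0 : g ≠ 0 := (Nat.gcd_pos_of_pos_left _ (by omega)).ne'
    have hdvd : ∀ P ∈ F.filter (fun P => P.natDegree = d), P ∣ X ^ g - 1 := by
      intro P hPG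
      rcases Finset.mem_filter.mp hPG with ⟨hPF, hPd⟩
      apply dvd_X_gcd P n (2 ^ d - 1)
      · exact (hFdvd P hPF).trans hTdvdXn
      · have hPX : P ≠ X := by
          intro h
          rw [h, natDegree_X] at hPd
          omega
        have := irred_dvd_X_pow P (hFprime P hPF).irreducible (hFmon P hPF) hPX
        rwa [hPd] at this
    have hprod : (∏ P ∈ F.filter (fun P => P.natDegree = d), P) ∣ X ^ g - 1 :=
      Finset.prod_primes_dvd _ (fun P hP => hFprime P (Finset.mem_filter.mp hP).1) hdvd
    have hXg : ((X : R) ^ g - 1).natDegree = g := by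
      simpa using natDegree_X_pow_sub_C (n := g) (r := (1 : ZMod 2))
    have hXg0 : ((X : R) ^ g - 1) ≠ 0 := by
      have : ((X : R) ^ g - 1).Monic := by simpa using monic_X_pow_sub_C (1 : ZMod 2) hg0
      exact this.ne_zero
    have hdegprod : (∏ P ∈ F.filter (fun P => P.natDegree = d), P).natDegree
        = d * (F.filter (fun P => P.natDegree = d)).card := by
      rw [Polynomial.natDegree_prod _ _
        (fun P hP => (hFprime P (Finset.mem_filter.mp hP).1).ne_zero)]
      rw [Finset.sum_congr rfl (fun P hP => (Finset.mem_filter.mp hP).2)]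
      rw [Finset.sum_const, smul_eq_mul, mul_comm]
    have := Polynomial.natDegree_le_of_dvd hprod hXg0
    rw [hdegprod, hXg] at this
    exact this
  -- counting: number of monic squarefree divisors is at most 2^r
  have hWT : {d : R | d.Monic ∧ Squarefree d ∧ d ∣ T}.ncard ≤ 2 ^ r := by
    have hrecon : ∀ x : R, x.Monic → Squarefree x →
        x = ∏ P ∈ (normalizedFactors x).toFinset, P := by
      intro x hxm hxsq
      have hx0 : x ≠ 0 := hxm.ne_zero
      have hnodup : (normalizedFactors x).Nodup :=
        (squarefree_iff_nodup_normalizedFactors hx0).mp hxsq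
      have h1 : (∏ P ∈ (normalizedFactors x).toFinset, P) = (normalizedFactors x).prod := by
        rw [Finset.prod_eq_multiset_prod, Multiset.toFinset_val, Multiset.map_id',
          Multiset.dedup_eq_self.mpr hnodup]
      rw [h1]
      exact (assoc_eq (prod_normalizedFactors hx0)).symm
    have h := Set.ncard_le_ncard_of_injOn (fun d : R => (normalizedFactors d).toFinset)
      (fun d hd => ?_) (fun d hd e he hde => ?_) ((F.powerset).finite_toSet)
      (s := {d : R | d.Monic ∧ Squarefree d ∧ d ∣ T})
      (t := ↑(F.powerset))
    · rwa [Set.ncard_coe_finset, Finset.card_powerset, ← hr] at h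
    · simp only [Set.mem_setOf_eq] at hd
      simp only [Finset.coe_powerset, Set.mem_preimage, Set.mem_powerset_iff, Finset.coe_subset]
      have hle : normalizedFactors d ≤ normalizedFactors T :=
        (dvd_iff_normalizedFactors_le_normalizedFactors hd.1.ne_zero hT0).mp hd.2.2
      intro P hP
      exact Multiset.mem_toFinset.mpr (Multiset.mem_of_le hle (Multiset.mem_toFinset.mp hP))
    · simp only [Set.mem_setOf_eq] at hd he
      rw [hrecon d hd.1 hd.2.1, hrecon e he.1 he.2.1]
      simp only at hde
      rw [hde]
  -- the integer side
  set m : ℕ := 2 ^ n - 1 with hm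
  have h2n : 2 ≤ 2 ^ n := by
    calc (2:ℕ) = 2 ^ 1 := (pow_one 2).symm
    _ ≤ 2 ^ n := Nat.pow_le_pow_right (by norm_num) (by omega)
  have hm0 : m ≠ 0 := by omega
  set Pr : Finset ℕ := m.primeFactors with hPr
  set w : ℕ := Pr.card with hw
  have hW2 : {d : ℕ | Squarefree d ∧ d ∣ m}.ncard ≤ 2 ^ w := by
    have h := Set.ncard_le_ncard_of_injOn (fun d : ℕ => d.primeFactors)
      (fun d hd => ?_) (fun d hd e he hde => ?_) ((Pr.powerset).finite_toSet)
      (s := {d : ℕ | Squarefree d ∧ d ∣ m})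
      (t := ↑(Pr.powerset))
    · rwa [Set.ncard_coe_finset, Finset.card_powerset, ← hw] at h
    · simp only [Set.mem_setOf_eq] at hd
      simp only [Finset.coe_powerset, Set.mem_preimage, Set.mem_powerset_iff, Finset.coe_subset]
      exact Nat.primeFactors_mono hd.2 hm0
    · simp only [Set.mem_setOf_eq] at hd he
      simp only at hde
      rw [← Nat.prod_primeFactors_of_squarefree hd.1, ← Nat.prod_primeFactors_of_squarefree he.1,
        hde]
  -- prime factor analysis
  have hPrfacts : ∀ p ∈ Pr, p.Prime ∧ p ∣ m := by
    intro p hp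
    exact ⟨Nat.prime_of_mem_primeFactors hp, Nat.dvd_of_mem_primeFactors hp⟩
  have hPrBig : ∀ p ∈ Pr, p = 7 ∨ p = 23 ∨ p = 31 ∨ p = 47 ∨ 64 ≤ p := by
    intro p hp
    obtain ⟨hpp, hpd⟩ := hPrfacts p hp
    by_cases h7 : p = 7
    · exact Or.inl h7
    by_cases h23 : p = 23
    · exact Or.inr (Or.inl h23)
    by_cases h31 : p = 31
    · exact Or.inr (Or.inr (Or.inl h31))
    by_cases h47 : p = 47
    · exact Or.inr (Or.inr (Or.inr (Or.inl h47)))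
    exact Or.inr (Or.inr (Or.inr (Or.inr (big_prime hpp hodd (hm ▸ hpd) h7 h23 h31 h47))))
  have hkey : ∀ p ∈ Pr, 2 ^ (if p = 7 then 2 else if p = 23 then 4 else if p = 31 then 4
      else if p = 47 then 5 else 6) ≤ p := by
    intro p hp
    rcases hPrBig p hp with rfl | rfl | rfl | rfl | hbig
    · norm_num
    · norm_num
    · norm_num
    · norm_num
    · split_ifs <;> omega
  have hprodle : ∏ p ∈ Pr, p ≤ m := Nat.le_of_dvd (by omega) (Nat.prod_primeFactors_dvd m)
  have hsumw : (∑ p ∈ Pr, (if p = 7 then 2 else if p = 23 then 4 else if p = 31 then 4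
      else if p = 47 then 5 else 6)) < n := by
    have h1 : 2 ^ (∑ p ∈ Pr, (if p = 7 then 2 else if p = 23 then 4 else if p = 31 then 4
        else if p = 47 then 5 else 6)) ≤ ∏ p ∈ Pr, p := by
      rw [← Finset.prod_pow_eq_pow_sum]
      exact Finset.prod_le_prod' hkey
    have h2 : (2:ℕ) ^ (∑ p ∈ Pr, (if p = 7 then 2 else if p = 23 then 4 else if p = 31 then 4
        else if p = 47 then 5 else 6)) < 2 ^ n := by omega
    exact (pow_lt_pow_iff_right₀ (by norm_num : (1:ℕ) < 2)).mp h2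
  -- indicators
  set A : ℕ := if 7 ∈ Pr then 1 else 0 with hA_def
  set B : ℕ := if 23 ∈ Pr then 1 else 0 with hB_def
  set C' : ℕ := if 31 ∈ Pr then 1 else 0 with hC_def
  set E : ℕ := if 47 ∈ Pr then 1 else 0 with hE_def
  have hsum6 : 6 * w ≤ (n - 1) + (4 * A + 2 * B + 2 * C' + E) := by
    have hsplit : ∀ p : ℕ, (if p = 7 then 2 else if p = 23 then 4 else if p = 31 then 4
        else if p = 47 then 5 else 6)
        + (4 * (if p = 7 then 1 else 0) + 2 * (if p = 23 then 1 else 0)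
          + 2 * (if p = 31 then 1 else 0) + (if p = 47 then 1 else 0)) = 6 := by
      intro p
      split_ifs <;> omega
    have h1 : 6 * w = ∑ p ∈ Pr, ((if p = 7 then 2 else if p = 23 then 4 else if p = 31 then 4
        else if p = 47 then 5 else 6)
        + (4 * (if p = 7 then 1 else 0) + 2 * (if p = 23 then 1 else 0)
          + 2 * (if p = 31 then 1 else 0) + (if p = 47 then 1 else 0))) := by
      rw [Finset.sum_congr rfl (fun p _ => hsplit p), Finset.sum_const, smul_eq_mul, mul_comm]
    rw [Finset.sum_add_distrib] at h1
    have h2 : ∑ p ∈ Pr, (4 * (if p = 7 then 1 else 0) + 2 * (if p = 23 then 1 else 0)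
          + 2 * (if p = 31 then 1 else 0) + (if p = 47 then 1 else 0))
        = 4 * A + 2 * B + 2 * C' + E := by
      rw [Finset.sum_add_distrib, Finset.sum_add_distrib, Finset.sum_add_distrib,
        ← Finset.mul_sum, ← Finset.mul_sum, ← Finset.mul_sum,
        Finset.sum_ite_eq' Pr 7 (fun _ => 1), Finset.sum_ite_eq' Pr 23 (fun _ => 1),
        Finset.sum_ite_eq' Pr 31 (fun _ => 1), Finset.sum_ite_eq' Pr 47 (fun _ => 1)]
    rw [h2] at h1
    omega
  -- indicator implications
  have hAd : A = 0 ∨ (A = 1 ∧ 3 ∣ n) := by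
    by_cases h : 7 ∈ Pr
    · refine Or.inr ⟨if_pos h, ?_⟩
      have hdv : (7:ℕ) ∣ 2 ^ n - 1 := by rw [← hm]; exact Nat.dvd_of_mem_primeFactors h
      have hpow : (2 : ZMod 7) ^ n = 1 := pow_eq_one_of_dvd hdv
      exact ord_dvd_of_pow 7 3 (by decide) (by decide) hpow
    · exact Or.inl (if_neg h)
  have hBd : B = 0 ∨ (B = 1 ∧ 11 ∣ n) := by
    by_cases h : 23 ∈ Pr
    · refine Or.inr ⟨if_pos h, ?_⟩
      have hdv : (23:ℕ) ∣ 2 ^ n - 1 := by rw [← hm]; exact Nat.dvd_of_mem_primeFactors h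
      have hpow : (2 : ZMod 23) ^ n = 1 := pow_eq_one_of_dvd hdv
      exact ord_dvd_of_pow 23 11 (by decide) (by decide) hpow
    · exact Or.inl (if_neg h)
  have hCd : C' = 0 ∨ (C' = 1 ∧ 5 ∣ n) := by
    by_cases h : 31 ∈ Pr
    · refine Or.inr ⟨if_pos h, ?_⟩
      have hdv : (31:ℕ) ∣ 2 ^ n - 1 := by rw [← hm]; exact Nat.dvd_of_mem_primeFactors h
      have hpow : (2 : ZMod 31) ^ n = 1 := pow_eq_one_of_dvd hdv
      exact ord_dvd_of_pow 31 5 (by decide) (by decide) hpow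
    · exact Or.inl (if_neg h)
  have hEd : E = 0 ∨ (E = 1 ∧ 23 ∣ n) := by
    by_cases h : 47 ∈ Pr
    · refine Or.inr ⟨if_pos h, ?_⟩
      have hdv : (47:ℕ) ∣ 2 ^ n - 1 := by rw [← hm]; exact Nat.dvd_of_mem_primeFactors h
      have hpow : (2 : ZMod 47) ^ n = 1 := pow_eq_one_of_dvd hdv
      exact ord_dvd_of_pow 47 23 (by decide) (by decide) hpow
    · exact Or.inl (if_neg h)
  -- degree count dichotomies
  set c2 : ℕ := (F.filter (fun P => P.natDegree = 2)).card with hc2_def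
  set c3 : ℕ := (F.filter (fun P => P.natDegree = 3)).card with hc3_def
  set c4 : ℕ := (F.filter (fun P => P.natDegree = 4)).card with hc4_def
  set c5 : ℕ := (F.filter (fun P => P.natDegree = 5)).card with hc5_def
  have hgcd2 := hcd 2 (by norm_num)
  have hgcd3 := hcd 3 (by norm_num)
  have hgcd4 := hcd 4 (by norm_num)
  have hgcd5 := hcd 5 (by norm_num)
  norm_num at hgcd2 hgcd3 hgcd4 hgcd5
  have hc2d : c2 = 0 ∨ (c2 ≤ 1 ∧ 3 ∣ n) := by
    have hd3 : Nat.gcd n 3 = 1 ∨ Nat.gcd n 3 = 3 :=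
      (by norm_num : Nat.Prime 3).eq_one_or_self_of_dvd _ (Nat.gcd_dvd_right n 3)
    rcases hd3 with h | h
    · rw [h] at hgcd2; omega
    · right
      constructor
      · rw [h] at hgcd2; omega
      · exact h ▸ Nat.gcd_dvd_left n 3
  have hc3d : c3 = 0 ∨ (c3 ≤ 2 ∧ 7 ∣ n) := by
    have hd7 : Nat.gcd n 7 = 1 ∨ Nat.gcd n 7 = 7 :=
      (by norm_num : Nat.Prime 7).eq_one_or_self_of_dvd _ (Nat.gcd_dvd_right n 7)
    rcases hd7 with h | h
    · rw [h] at hgcd3; omega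
    · right
      exact ⟨by rw [h] at hgcd3; omega, h ▸ Nat.gcd_dvd_left n 7⟩
  have hc5d : c5 = 0 ∨ (c5 ≤ 6 ∧ 31 ∣ n) := by
    have hd31 : Nat.gcd n 31 = 1 ∨ Nat.gcd n 31 = 31 :=
      (by norm_num : Nat.Prime 31).eq_one_or_self_of_dvd _ (Nat.gcd_dvd_right n 31)
    rcases hd31 with h | h
    · rw [h] at hgcd5; omega
    · right
      exact ⟨by rw [h] at hgcd5; omega, h ▸ Nat.gcd_dvd_left n 31⟩
  have hc4d : c4 = 0 ∨ (c4 ≤ 1 ∧ 5 ∣ n) ∨ (c4 ≤ 3 ∧ 3 ∣ n ∧ 5 ∣ n) := by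
    have hd15 : Nat.gcd n 15 = 1 ∨ Nat.gcd n 15 = 3 ∨ Nat.gcd n 15 = 5 ∨ Nat.gcd n 15 = 15 := by
      have h1 : Nat.gcd n 15 ∣ 15 := Nat.gcd_dvd_right n 15
      have h2 : ∀ g ∈ Nat.divisors 15, g = 1 ∨ g = 3 ∨ g = 5 ∨ g = 15 := by decide
      exact h2 _ (Nat.mem_divisors.mpr ⟨h1, by norm_num⟩)
    have hgn : Nat.gcd n 15 ∣ n := Nat.gcd_dvd_left n 15
    rcases hd15 with h | h | h | h
    · rw [h] at hgcd4; omega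
    · rw [h] at hgcd4; omega
    · right; left
      exact ⟨by rw [h] at hgcd4; omega, h ▸ hgn⟩
    · right; right
      refine ⟨by rw [h] at hgcd4; omega, ?_, ?_⟩
      · exact dvd_trans (by norm_num) (h ▸ hgn)
      · exact dvd_trans (by norm_num) (h ▸ hgn)
  -- the polynomial 6r bound
  have h6r : 6 * r ≤ (∑ P ∈ F, P.natDegree) + (4 * c2 + 3 * c3 + 2 * c4 + c5) := by
    have hwp : ∀ P ∈ F, 6 ≤ P.natDegree +
        (4 * (if P.natDegree = 2 then 1 else 0) + 3 * (if P.natDegree = 3 then 1 else 0)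
          + 2 * (if P.natDegree = 4 then 1 else 0) + (if P.natDegree = 5 then 1 else 0)) := by
      intro P hP
      have := hFdeg P hP
      split_ifs <;> omega
    have h1 : 6 * r ≤ ∑ P ∈ F, (P.natDegree +
        (4 * (if P.natDegree = 2 then 1 else 0) + 3 * (if P.natDegree = 3 then 1 else 0)
          + 2 * (if P.natDegree = 4 then 1 else 0) + (if P.natDegree = 5 then 1 else 0))) := by
      calc 6 * r = ∑ _P ∈ F, 6 := by rw [Finset.sum_const, smul_eq_mul, mul_comm]
      _ ≤ _ := Finset.sum_le_sum hwp
    rw [Finset.sum_add_distrib] at h1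
    have h2 : ∑ P ∈ F, (4 * (if P.natDegree = 2 then 1 else 0)
          + 3 * (if P.natDegree = 3 then 1 else 0)
          + 2 * (if P.natDegree = 4 then 1 else 0) + (if P.natDegree = 5 then 1 else 0))
        = 4 * c2 + 3 * c3 + 2 * c4 + c5 := by
      rw [Finset.sum_add_distrib, Finset.sum_add_distrib, Finset.sum_add_distrib,
        ← Finset.mul_sum, ← Finset.mul_sum, ← Finset.mul_sum,
        hc2_def, hc3_def, hc4_def, hc5_def,
        Finset.card_filter, Finset.card_filter, Finset.card_filter, Finset.card_filter]
    rw [h2] at h1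
    exact h1
  -- final arithmetic
  have hoddn : n % 2 = 1 := Nat.odd_iff.mp hodd
  have harith : 2 * (r + w) + 3 ≤ n :=
    final_arith n r w A B C' E c2 c3 c4 c5 (∑ P ∈ F, P.natDegree) hn hn15 hoddn
      h6r hsumdeg hsum6 hAd hBd hCd hEd hc2d hc3d hc4d hc5d
  -- conclude
  have hprodnat : ({d : R | d.Monic ∧ Squarefree d ∧ d ∣ T}.ncard)
      * ({d : ℕ | Squarefree d ∧ d ∣ m}.ncard) ≤ 2 ^ (r + w) := by
    rw [pow_add]
    exact Nat.mul_le_mul hWT hW2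
  have hcast : (({d : R | d.Monic ∧ Squarefree d ∧ d ∣ T}.ncard : ℝ)
      * ({d : ℕ | Squarefree d ∧ d ∣ m}.ncard : ℝ)) ≤ ((2:ℝ) ^ (r + w : ℕ)) := by
    have := (Nat.cast_le (α := ℝ)).mpr hprodnat
    push_cast at this
    push_cast
    linarith
  calc (({d : R | d.Monic ∧ Squarefree d ∧ d ∣ T}.ncard : ℝ)
      * ({d : ℕ | Squarefree d ∧ d ∣ m}.ncard : ℝ))
      ≤ (2:ℝ) ^ (r + w : ℕ) := hcast
    _ < (2 : ℝ) ^ ((n : ℝ) / 2 - 1) := by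
      rw [← Real.rpow_natCast 2 (r + w)]
      apply (Real.rpow_lt_rpow_left_iff (by norm_num : (1:ℝ) < 2)).mpr
      have : ((2 * (r + w) + 3 : ℕ) : ℝ) ≤ (n : ℝ) := Nat.cast_le.mpr harith
      push_cast at this ⊢
      linarith

end Main
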